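/- Let n ≥ 2 be an integer, let c_1, …, c_{n+2} be pairwise distinct elements of Ω, and set S = {c_1,…,c_{n+2}}. There do not exist functions f_1, …, f_{n+2}, each lying in the image of β*_{n,n-1} : F_2^{[Ω]^{n-1}} → F_2^{[Ω]^n}, such that: (i) f_i(S∖{c_i,c_j}) = f_j(S∖{c_i,c_j}) for all i ≠ j in {1,…,n+2} with {i,j} ≠ {n+1,n+2}, and (ii) f_{n+1}(S∖{c_{n+1},c_{n+2}}) = f_{n+2}(S∖{c_{n+1},c_{n+2}}) + 1 in F_2. -/

import Mathlib

/-- The set of `m`-element subsets of `Ω`. -/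
abbrev NSubsets (Ω : Type*) (m : ℕ) := {s : Finset Ω // s.card = m}

/-- The dual map `β*_{m,j} : F₂^{[Ω]^j} → F₂^{[Ω]^m}`,
`(β*_{m,j} f)(ω) = Σ_{x ∈ [ω]^j} f(x)`. -/
noncomputable def betaStar (Ω : Type*) (m j : ℕ) :
    (NSubsets Ω j → ZMod 2) →ₗ[ZMod 2] (NSubsets Ω m → ZMod 2) where
  toFun f := fun ω => ∑ x ∈ (Finset.powersetCard j ω.1).attach,
      f ⟨x.1, (Finset.mem_powersetCard.mp x.2).2⟩
  map_add' f g := by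
    funext ω
    simp [Finset.sum_add_distrib]
  map_smul' c f := by
    funext ω
    simp [Finset.mul_sum, smul_eq_mul]

/-- The map `β_{m,j} : F₂[Ω]^m → F₂[Ω]^j` on the free modules, sending a basis
element `ω ∈ [Ω]^m` to `Σ_{ω' ∈ [ω]^j} ω'`. -/
noncomputable def beta (Ω : Type*) (m j : ℕ) :
    (NSubsets Ω m →₀ ZMod 2) →ₗ[ZMod 2] (NSubsets Ω j →₀ ZMod 2) :=
  Finsupp.lsum (ZMod 2) fun ω =>
    ∑ x ∈ (Finset.powersetCard j ω.1).attach,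
      Finsupp.lsingle ⟨x.1, (Finset.mem_powersetCard.mp x.2).2⟩

/-- The natural action of a permutation of `Ω` on `m`-element subsets of `Ω`. -/
def permImage {Ω : Type*} [DecidableEq Ω] (σ : Equiv.Perm Ω) {n : ℕ}
    (w : NSubsets Ω n) : NSubsets Ω n :=
  ⟨w.1.image σ, by rw [Finset.card_image_of_injective _ σ.injective, w.2]⟩

/-- `V_{B,A}`: functions on `[Ω]^{n-1}` vanishing at every `w` with `w ∩ A ≠ B`. -/
def VBA (Ω : Type*) [DecidableEq Ω] (n : ℕ) (A B : Finset Ω) :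
    Submodule (ZMod 2) (NSubsets Ω (n - 1) → ZMod 2) where
  carrier := {f | ∀ w : NSubsets Ω (n - 1), w.1 ∩ A ≠ B → f w = 0}
  add_mem' := by
    intro f g hf hg w hw
    simp only [Pi.add_apply, hf w hw, hg w hw, add_zero]
  zero_mem' := fun w _ => rfl
  smul_mem' := by
    intro c f hf w hw
    simp only [Pi.smul_apply, hf w hw, smul_zero]

/-- `V_A`: the sum of the subspaces `V_{B,A}` over `B ⊆ A` with `|B| < n - 1`. -/
def VA (Ω : Type*) [DecidableEq Ω] (n : ℕ) (A : Finset Ω) :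
    Submodule (ZMod 2) (NSubsets Ω (n - 1) → ZMod 2) :=
  ⨆ B ∈ {B : Finset Ω | B ⊆ A ∧ B.card < n - 1}, VBA Ω n A B

/-- `W_A = β*_{n,n-1}(V_A)`. -/
noncomputable def WA (Ω : Type*) [DecidableEq Ω] (n : ℕ) (A : Finset Ω) :
    Submodule (ZMod 2) (NSubsets Ω n → ZMod 2) :=
  (VA Ω n A).map (betaStar Ω n (n - 1))

/-- For distinct `c₁, …, c_{n+2}` in `Ω` with `S = {c₁,…,c_{n+2}}`, the `n`-element
subset `S ∖ {cᵢ, cⱼ}` of `Ω` (for `i ≠ j`). -/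
def sdiffPair (Ω : Type*) [DecidableEq Ω] (n : ℕ) (c : Fin (n + 2) → Ω)
    (hc : Function.Injective c) (i j : Fin (n + 2)) (hij : i ≠ j) :
    NSubsets Ω n :=
  ⟨Finset.univ.image c \ {c i, c j}, by
    have hsub : ({c i, c j} : Finset Ω) ⊆ Finset.univ.image c := by
      intro x hx
      simp only [Finset.mem_insert, Finset.mem_singleton] at hx
      rcases hx with rfl | rfl <;> exact Finset.mem_image_of_mem c (Finset.mem_univ _)
    have hcard2 : ({c i, c j} : Finset Ω).card = 2 := by
      rw [Finset.card_insert_of_notMem (by simp [hc.ne hij]), Finset.card_singleton]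
    rw [Finset.card_sdiff_of_subset hsub, hcard2, Finset.card_image_of_injective _ hc,
      Finset.card_univ, Fintype.card_fin]
    omega⟩

/-- The obstruction to `(n+2)`-existence: with `S = {c₁,…,c_{n+2}}` pairwise distinct,
there is no family `f₁, …, f_{n+2}` of elements of `Im β*_{n,n-1}` such that
`fᵢ(S∖{cᵢ,cⱼ}) = fⱼ(S∖{cᵢ,cⱼ})` whenever `i ≠ j` and `{i,j} ≠ {n+1,n+2}`, while
`f_{n+1}(S∖{c_{n+1},c_{n+2}}) = f_{n+2}(S∖{c_{n+1},c_{n+2}}) + 1`. -/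
lemma aux_beta {Ω : Type*} (n : ℕ) (g : NSubsets Ω (n-1) → ZMod 2) (T : NSubsets Ω n) :
    betaStar Ω n (n-1) g T =
      ∑ x ∈ Finset.powersetCard (n-1) T.1,
        (if h : x.card = n - 1 then g ⟨x, h⟩ else 0) := by
  show ∑ x ∈ (Finset.powersetCard (n-1) T.1).attach,
      g ⟨x.1, (Finset.mem_powersetCard.mp x.2).2⟩ = _
  rw [← Finset.sum_attach (Finset.powersetCard (n-1) T.1)
      (fun x => if h : x.card = n-1 then g ⟨x,h⟩ else 0)]
  refine Finset.sum_congr rfl fun x _ => ?_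
  rw [dif_pos (Finset.mem_powersetCard.mp x.2).2]

lemma aux_count {Ω : Type*} [DecidableEq Ω] {n : ℕ} (hn : 2 ≤ n) {c : Fin (n+2) → Ω}
    (hc : Function.Injective c) (i : Fin (n+2)) {x : Finset Ω}
    (hx : x ∈ Finset.powersetCard (n-1) (Finset.univ.image c \ {c i})) :
    ((Finset.univ.erase i).filter
      (fun j => x ∈ Finset.powersetCard (n-1) (Finset.univ.image c \ {c i, c j}))).card = 2 := by
  obtain ⟨hxsub, hxcard⟩ := Finset.mem_powersetCard.mp hx
  have hxS : ∀ a ∈ x, a ∈ Finset.univ.image c ∧ a ≠ c i := by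
    intro a ha
    have := hxsub ha
    rw [Finset.mem_sdiff, Finset.mem_singleton] at this
    exact this
  have hci : c i ∉ x := fun h => (hxS _ h).2 rfl
  have heq : (Finset.univ.erase i).filter
      (fun j => x ∈ Finset.powersetCard (n-1) (Finset.univ.image c \ {c i, c j}))
      = (Finset.univ.erase i).filter (fun j => ¬ (c j ∈ x)) := by
    apply Finset.filter_congr
    intro j hj
    simp only [Finset.mem_powersetCard, iff_iff_implies_and_implies]
    constructor
    · rintro ⟨hsub, -⟩ hcj
      have := hsub hcj
      rw [Finset.mem_sdiff] at this
      exact this.2 (by simp)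
    · intro hcj
      refine ⟨fun a ha => ?_, hxcard⟩
      rw [Finset.mem_sdiff, Finset.mem_insert, Finset.mem_singleton]
      refine ⟨(hxS a ha).1, ?_⟩
      push_neg
      exact ⟨(hxS a ha).2, fun h => hcj (h ▸ ha)⟩
  rw [heq, Finset.filter_not, Finset.card_sdiff_of_subset (Finset.filter_subset _ _)]
  have h1 : (Finset.univ.erase i).card = n + 1 := by
    rw [Finset.card_erase_of_mem (Finset.mem_univ i)]
    simp
  have h2 : ((Finset.univ.erase i).filter (fun j => c j ∈ x)).card = n - 1 := by
    rw [← hxcard]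
    apply Finset.card_bij (fun j _ => c j)
    · intro a ha
      exact (Finset.mem_filter.mp ha).2
    · intro a ha b hb h
      exact hc h
    · intro a ha
      obtain ⟨j, -, rfl⟩ := Finset.mem_image.mp (hxS a ha).1
      refine ⟨j, Finset.mem_filter.mpr ⟨Finset.mem_erase.mpr ⟨?_, Finset.mem_univ _⟩, ha⟩, rfl⟩
      intro h
      exact (hxS _ ha).2 (h ▸ rfl)
  rw [h1, h2]
  omega

lemma aux_key {Ω : Type*} [DecidableEq Ω] {n : ℕ} (hn : 2 ≤ n) {c : Fin (n+2) → Ω}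
    (hc : Function.Injective c) (i : Fin (n+2)) (F : Finset Ω → ZMod 2) :
    ∑ j ∈ Finset.univ.erase i,
      ∑ x ∈ Finset.powersetCard (n-1) (Finset.univ.image c \ {c i, c j}), F x = 0 := by
  classical
  set S := (Finset.univ.image c : Finset Ω) with hS
  set U := Finset.powersetCard (n-1) (S \ {c i}) with hU
  have hsub : ∀ j : Fin (n+2), Finset.powersetCard (n-1) (S \ {c i, c j}) ⊆ U := by
    intro j y hy
    rw [Finset.mem_powersetCard] at hy ⊢
    refine ⟨fun a ha => ?_, hy.2⟩
    have := hy.1 ha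
    rw [Finset.mem_sdiff, Finset.mem_insert] at this
    rw [Finset.mem_sdiff, Finset.mem_singleton]
    exact ⟨this.1, fun h => this.2 (Or.inl h)⟩
  have step1 : ∀ j : Fin (n+2),
      ∑ x ∈ Finset.powersetCard (n-1) (S \ {c i, c j}), F x
        = ∑ x ∈ U, if x ∈ Finset.powersetCard (n-1) (S \ {c i, c j}) then F x else 0 := by
    intro j
    rw [Finset.sum_ite_mem, Finset.inter_eq_right.mpr (hsub j)]
  calc ∑ j ∈ Finset.univ.erase i,
      ∑ x ∈ Finset.powersetCard (n-1) (S \ {c i, c j}), F x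
      = ∑ j ∈ Finset.univ.erase i, ∑ x ∈ U,
          if x ∈ Finset.powersetCard (n-1) (S \ {c i, c j}) then F x else 0 :=
        Finset.sum_congr rfl fun j _ => step1 j
    _ = ∑ x ∈ U, ∑ j ∈ Finset.univ.erase i,
          if x ∈ Finset.powersetCard (n-1) (S \ {c i, c j}) then F x else 0 :=
        Finset.sum_comm
    _ = 0 := by
        apply Finset.sum_eq_zero
        intro x hx
        rw [← Finset.sum_filter, Finset.sum_const, aux_count hn hc i hx]
        exact CharTwo.two_nsmul _

theorem no_compatible_family
    (Ω : Type) [Countable Ω] [Infinite Ω] [DecidableEq Ω] (n : ℕ) (hn : 2 ≤ n)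
    (c : Fin (n + 2) → Ω) (hc : Function.Injective c) :
    ¬ ∃ f : Fin (n + 2) → (NSubsets Ω n → ZMod 2),
      (∀ i, f i ∈ LinearMap.range (betaStar Ω n (n - 1))) ∧
      (∀ (i j : Fin (n + 2)) (hij : i ≠ j),
        ({i, j} : Finset (Fin (n + 2))) ≠
          {(⟨n, by omega⟩ : Fin (n + 2)), (⟨n + 1, by omega⟩ : Fin (n + 2))} →
        f i (sdiffPair Ω n c hc i j hij) = f j (sdiffPair Ω n c hc i j hij)) ∧
      (f ⟨n, by omega⟩ (sdiffPair Ω n c hc ⟨n, by omega⟩ ⟨n + 1, by omega⟩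
          (by intro h; rw [Fin.mk.injEq] at h; omega)) =
        f ⟨n + 1, by omega⟩ (sdiffPair Ω n c hc ⟨n, by omega⟩ ⟨n + 1, by omega⟩
          (by intro h; rw [Fin.mk.injEq] at h; omega)) + 1) := by
  rintro ⟨f, hrange, hcomp, hspec⟩
  classical
  choose g hg using hrange
  set a : Fin (n+2) := ⟨n, by omega⟩ with ha
  set b : Fin (n+2) := ⟨n+1, by omega⟩ with hb
  have hab : a < b := by simp [ha, hb, Fin.mk_lt_mk]
  set G : Fin (n+2) → Fin (n+2) → ZMod 2 := fun i j =>
    ∑ x ∈ Finset.powersetCard (n-1) (Finset.univ.image c \ {c i, c j}),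
      (if h : x.card = n - 1 then g i ⟨x, h⟩ else 0) with hG
  have hGf : ∀ (i j : Fin (n+2)) (hij : i ≠ j),
      f i (sdiffPair Ω n c hc i j hij) = G i j := by
    intro i j hij
    rw [← hg i]
    exact aux_beta n (g i) _
  -- sdiffPair symmetry
  have hsymm : ∀ (i j : Fin (n+2)) (hij : i ≠ j),
      sdiffPair Ω n c hc i j hij = sdiffPair Ω n c hc j i hij.symm := by
    intro i j hij
    apply Subtype.ext
    show Finset.univ.image c \ {c i, c j} = Finset.univ.image c \ {c j, c i}
    rw [Finset.pair_comm]
  -- total sum is zero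
  have htotal0 : ∑ i : Fin (n+2), ∑ j ∈ Finset.univ.erase i, G i j = 0 :=
    Finset.sum_eq_zero fun i _ => aux_key hn hc i _
  -- split erase
  have hsplit : ∀ i : Fin (n+2), Finset.univ.erase i =
      (Finset.univ.filter (fun j => i < j)) ∪ (Finset.univ.filter (fun j => j < i)) := by
    intro i
    ext j
    simp only [Finset.mem_erase, Finset.mem_univ, and_true, Finset.mem_union,
      Finset.mem_filter, true_and]
    omega
  have hdisj : ∀ i : Fin (n+2),
      Disjoint (Finset.univ.filter (fun j => i < j)) (Finset.univ.filter (fun j => j < i)) := by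
    intro i
    rw [Finset.disjoint_filter]
    intro j _ h1 h2
    exact absurd h2 (not_lt_of_gt h1)
  have htotal : ∑ i : Fin (n+2), ∑ j ∈ Finset.univ.erase i, G i j
      = ∑ i : Fin (n+2), ∑ j ∈ Finset.univ.filter (fun j => i < j), (G i j + G j i) := by
    calc ∑ i : Fin (n+2), ∑ j ∈ Finset.univ.erase i, G i j
        = ∑ i : Fin (n+2), (∑ j ∈ Finset.univ.filter (fun j => i < j), G i j
            + ∑ j ∈ Finset.univ.filter (fun j => j < i), G i j) := by
          refine Finset.sum_congr rfl fun i _ => ?_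
          rw [hsplit i, Finset.sum_union (hdisj i)]
      _ = (∑ i : Fin (n+2), ∑ j ∈ Finset.univ.filter (fun j => i < j), G i j)
            + ∑ i : Fin (n+2), ∑ j ∈ Finset.univ.filter (fun j => j < i), G i j := by
          rw [Finset.sum_add_distrib]
      _ = (∑ i : Fin (n+2), ∑ j ∈ Finset.univ.filter (fun j => i < j), G i j)
            + ∑ j : Fin (n+2), ∑ i ∈ Finset.univ.filter (fun i => j < i), G i j := by
          congr 1
          exact Finset.sum_comm' fun x y => by simp
      _ = ∑ i : Fin (n+2), ∑ j ∈ Finset.univ.filter (fun j => i < j), (G i j + G j i) := by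
          rw [← Finset.sum_add_distrib]
          refine Finset.sum_congr rfl fun i _ => ?_
          rw [← Finset.sum_add_distrib]
  -- each term
  have hterm : ∀ (i j : Fin (n+2)), i < j →
      G i j + G j i = if i = a ∧ j = b then 1 else 0 := by
    intro i j hij
    have hne : i ≠ j := ne_of_lt hij
    rw [← hGf i j hne, ← hGf j i hne.symm, ← hsymm i j hne]
    by_cases hcase : i = a ∧ j = b
    · obtain ⟨rfl, rfl⟩ := hcase
      rw [if_pos ⟨rfl, rfl⟩]
      rw [hspec]
      rw [add_comm (f b _) 1, add_assoc, CharTwo.add_self_eq_zero, add_zero]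
    · rw [if_neg hcase]
      have hpair : ({i, j} : Finset (Fin (n+2))) ≠ {a, b} := by
        intro h
        apply hcase
        have hi : i ∈ ({a, b} : Finset (Fin (n+2))) := h ▸ (by simp)
        have hj : j ∈ ({a, b} : Finset (Fin (n+2))) := h ▸ (by simp)
        simp only [Finset.mem_insert, Finset.mem_singleton] at hi hj
        rcases hi with rfl | rfl <;> rcases hj with rfl | rfl
        · exact absurd rfl hne
        · exact ⟨rfl, rfl⟩
        · exact absurd hij (by simp [not_lt_of_gt hab, not_lt.mpr (le_of_lt hab)])
        · exact absurd rfl hne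
      rw [hcomp i j hne hpair, CharTwo.add_self_eq_zero]
  -- total sum is one
  have htotal1 : ∑ i : Fin (n+2), ∑ j ∈ Finset.univ.filter (fun j => i < j), (G i j + G j i)
      = 1 := by
    have : ∀ i : Fin (n+2), ∑ j ∈ Finset.univ.filter (fun j => i < j), (G i j + G j i)
        = if i = a then 1 else 0 := by
      intro i
      by_cases hia : i = a
      · subst hia
        rw [if_pos rfl]
        have h1 : ∀ j ∈ Finset.univ.filter (fun j => a < j),
            G a j + G j a = if j = b then 1 else 0 := by
          intro j hj
          rw [hterm a j (Finset.mem_filter.mp hj).2]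
          simp
        rw [Finset.sum_congr rfl h1, Finset.sum_ite_eq' (Finset.univ.filter (fun j => a < j)) b
          (fun _ => (1 : ZMod 2)), if_pos (Finset.mem_filter.mpr ⟨Finset.mem_univ _, hab⟩)]
      · rw [if_neg hia]
        apply Finset.sum_eq_zero
        intro j hj
        rw [hterm i j (Finset.mem_filter.mp hj).2, if_neg]
        tauto
    rw [Finset.sum_congr rfl fun i _ => this i]
    simp
  rw [htotal, htotal1] at htotal0
  exact one_ne_zero htotal0
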